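/- Let N ≥ 2, Δx > 0, let f : ℝ → ℝ be continuously differentiable, let φ₀, φ₁ : ℝ → ℝ be continuously differentiable, let T_N ∈ ℝ^{N×N} be the symmetric tridiagonal matrix with 2's on the diagonal and −1's on the sub- and super-diagonals, and let φ(t) = (φ₀(t), 0, …, 0, φ₁(t))ᵀ ∈ ℝ^N. Define H(q,p,t) = Δx [ ½ pᵀp + qᵀT_N q/(2Δx²) + Σ_{i=1}^N f(q_i) ] + φ(t)ᵀφ(t)/(2Δx) − qᵀφ(t)/Δx. If q, p : [0,∞) → ℝ^N solve q' = p, p' = −(1/Δx²) T_N q + (1/Δx²) φ(t) − f'(q), then for all t > 0, (d/dt) H(q(t),p(t),t) = [(φ₀(t) − q₁(t)) φ₀'(t) + (φ₁(t) − q_N(t)) φ₁'(t)] / Δx. -/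

import Mathlib

/-- for the Dirichlet finite-difference semi-discretization
`q' = p`, `p' = −(1/Δx²) T_N q + (1/Δx²) φ(t) − f'(q)` with
`T_N = tridiag(−1,2,−1)` and `φ(t) = (φ₀(t),0,…,0,φ₁(t))ᵀ`, the non-autonomous Hamiltonian
`H(q,p,t) = Δx[½pᵀp + qᵀT_Nq/(2Δx²) + Σᵢ f(qᵢ)] + φᵀφ/(2Δx) − qᵀφ/Δx` satisfies
`(d/dt)H(q(t),p(t),t) = [(φ₀(t)−q₁(t))φ₀'(t) + (φ₁(t)−q_N(t))φ₁'(t)]/Δx` for `t > 0`. -/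
theorem stmt_12 (N : ℕ) (hN : 2 ≤ N) (Δx : ℝ) (hΔx : 0 < Δx)
    (f : ℝ → ℝ) (hf : ContDiff ℝ 1 f)
    (φ₀ φ₁ : ℝ → ℝ) (hφ₀ : ContDiff ℝ 1 φ₀) (hφ₁ : ContDiff ℝ 1 φ₁)
    (T : Matrix (Fin N) (Fin N) ℝ)
    (hT : ∀ i j : Fin N, T i j =
      if i = j then 2 else if i.val + 1 = j.val ∨ j.val + 1 = i.val then -1 else 0)
    (φv : ℝ → Fin N → ℝ)
    (hφv : ∀ t (i : Fin N), φv t i =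
      if i.val = 0 then φ₀ t else if i.val = N - 1 then φ₁ t else 0)
    (H : (Fin N → ℝ) → (Fin N → ℝ) → ℝ → ℝ)
    (hH : ∀ qv pv t, H qv pv t
      = Δx * ((1/2) * ∑ i, (pv i)^2
          + dotProduct qv (T.mulVec qv) / (2 * Δx^2) + ∑ i, f (qv i))
        + dotProduct (φv t) (φv t) / (2 * Δx)
        - dotProduct qv (φv t) / Δx)
    (q p : ℝ → Fin N → ℝ)
    (hq : ∀ t ∈ Set.Ici (0:ℝ), HasDerivAt q (p t) t)
    (hp : ∀ t ∈ Set.Ici (0:ℝ), HasDerivAt p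
      (fun i => -(1/Δx^2) * T.mulVec (q t) i + (1/Δx^2) * φv t i - deriv f (q t i)) t) :
    ∀ t > (0:ℝ),
      deriv (fun τ => H (q τ) (p τ) τ) t
        = ((φ₀ t - q t ⟨0, by omega⟩) * deriv φ₀ t
            + (φ₁ t - q t ⟨N - 1, by omega⟩) * deriv φ₁ t) / Δx := by
  intro t ht
  have ht0 : t ∈ Set.Ici (0:ℝ) := le_of_lt ht
  have hΔ : Δx ≠ 0 := ne_of_gt hΔx
  have hmv : ∀ (v : Fin N → ℝ) (i : Fin N), T.mulVec v i = ∑ j, T i j * v j :=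
    fun v i => rfl
  have hdot : ∀ (v w : Fin N → ℝ), dotProduct v w = ∑ i, v i * w i :=
    fun v w => rfl
  -- componentwise derivatives
  have hq' : ∀ i : Fin N, HasDerivAt (fun τ => q τ i) (p t i) t :=
    fun i => (hasDerivAt_pi.mp (hq t ht0)) i
  have hp' : ∀ i : Fin N, HasDerivAt (fun τ => p τ i)
      (-(1/Δx^2) * (∑ j, T i j * q t j) + (1/Δx^2) * φv t i - deriv f (q t i)) t := by
    intro i
    have h := (hasDerivAt_pi.mp (hp t ht0)) i
    simpa [hmv] using h
  set Φ' : Fin N → ℝ := fun i =>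
    if i.val = 0 then deriv φ₀ t else if i.val = N - 1 then deriv φ₁ t else 0 with hΦ'
  have hφ' : ∀ i : Fin N, HasDerivAt (fun τ => φv τ i) (Φ' i) t := by
    intro i
    have heq : (fun τ => φv τ i)
        = (fun τ => if i.val = 0 then φ₀ τ else if i.val = N - 1 then φ₁ τ else 0) :=
      funext fun τ => hφv τ i
    rw [heq, hΦ']
    by_cases h0 : i.val = 0
    · simp only [if_pos h0]
      exact (hφ₀.differentiable one_ne_zero t).hasDerivAt
    · simp only [if_neg h0]
      by_cases h1 : i.val = N - 1
      · simp only [if_pos h1]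
        exact (hφ₁.differentiable one_ne_zero t).hasDerivAt
      · simp only [if_neg h1]
        exact hasDerivAt_const t 0
  -- the function equals an explicit sum expression
  have hfun : (fun τ => H (q τ) (p τ) τ)
      = (fun τ => Δx * ((1/2) * ∑ i, (p τ i)^2
          + (∑ i, q τ i * ∑ j, T i j * q τ j) / (2 * Δx^2) + ∑ i, f (q τ i))
        + (∑ i, φv τ i * φv τ i) / (2 * Δx)
        - (∑ i, q τ i * φv τ i) / Δx) := by
    funext τ
    rw [hH]
    simp only [hdot, hmv]
  -- derivatives of the pieces
  have h1 : HasDerivAt (fun τ => ∑ i, (p τ i)^2)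
      (∑ i, 2 * p t i *
        (-(1/Δx^2) * (∑ j, T i j * q t j) + (1/Δx^2) * φv t i - deriv f (q t i))) t := by
    have h := HasDerivAt.fun_sum (fun i (_ : i ∈ (Finset.univ : Finset (Fin N))) => (hp' i).pow 2)
    simpa using h
  have h2 : HasDerivAt (fun τ => ∑ i, q τ i * ∑ j, T i j * q τ j)
      (∑ i, (p t i * (∑ j, T i j * q t j) + q t i * ∑ j, T i j * p t j)) t :=
    HasDerivAt.fun_sum fun i _ =>
      (hq' i).mul (HasDerivAt.fun_sum fun j _ => (hq' j).const_mul (T i j))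
  have h3 : HasDerivAt (fun τ => ∑ i, f (q τ i)) (∑ i, deriv f (q t i) * p t i) t :=
    HasDerivAt.fun_sum fun i _ =>
      ((hf.differentiable one_ne_zero (q t i)).hasDerivAt).comp t (hq' i)
  have h4 : HasDerivAt (fun τ => ∑ i, φv τ i * φv τ i)
      (∑ i, (Φ' i * φv t i + φv t i * Φ' i)) t :=
    HasDerivAt.fun_sum fun i _ => (hφ' i).mul (hφ' i)
  have h5 : HasDerivAt (fun τ => ∑ i, q τ i * φv τ i)
      (∑ i, (p t i * φv t i + q t i * Φ' i)) t :=
    HasDerivAt.fun_sum fun i _ => (hq' i).mul (hφ' i)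
  have hD : HasDerivAt (fun τ => Δx * ((1/2) * ∑ i, (p τ i)^2
          + (∑ i, q τ i * ∑ j, T i j * q τ j) / (2 * Δx^2) + ∑ i, f (q τ i))
        + (∑ i, φv τ i * φv τ i) / (2 * Δx)
        - (∑ i, q τ i * φv τ i) / Δx)
      (Δx * ((1/2) * (∑ i, 2 * p t i *
          (-(1/Δx^2) * (∑ j, T i j * q t j) + (1/Δx^2) * φv t i - deriv f (q t i)))
          + (∑ i, (p t i * (∑ j, T i j * q t j) + q t i * ∑ j, T i j * p t j)) / (2 * Δx^2)
          + ∑ i, deriv f (q t i) * p t i)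
        + (∑ i, (Φ' i * φv t i + φv t i * Φ' i)) / (2 * Δx)
        - (∑ i, (p t i * φv t i + q t i * Φ' i)) / Δx) t :=
    (((((h1.const_mul (1/2)).add (h2.div_const (2 * Δx^2))).add h3).const_mul Δx).add
      (h4.div_const (2 * Δx))).sub (h5.div_const Δx)
  rw [hfun, hD.deriv]
  -- now the algebra
  have hTsym : ∀ i j : Fin N, T i j = T j i := by
    intro i j
    rw [hT, hT]
    by_cases h : i = j
    · simp [h]
    · rw [if_neg h, if_neg (Ne.symm h)]
      by_cases h2 : i.val + 1 = j.val ∨ j.val + 1 = i.val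
      · rw [if_pos h2, if_pos (Or.symm h2)]
      · rw [if_neg h2, if_neg (fun hc => h2 (Or.symm hc))]
  have hNe : (⟨0, by omega⟩ : Fin N) ≠ ⟨N - 1, by omega⟩ := by
    simp only [Ne, Fin.mk.injEq]
    omega
  have hsupp : ∀ g : Fin N → ℝ, (∑ i, g i * Φ' i)
      = g ⟨0, by omega⟩ * deriv φ₀ t + g ⟨N - 1, by omega⟩ * deriv φ₁ t := by
    intro g
    rw [← Finset.sum_subset
      (Finset.subset_univ ({⟨0, by omega⟩, ⟨N - 1, by omega⟩} : Finset (Fin N)))]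
    · rw [Finset.sum_pair hNe]
      have hn0 : N - 1 ≠ 0 := by omega
      have e0 : Φ' ⟨0, by omega⟩ = deriv φ₀ t := by simp [hΦ']
      have e1 : Φ' ⟨N - 1, by omega⟩ = deriv φ₁ t := by simp [hΦ', hn0]
      rw [e0, e1]
    · intro x _ hx
      simp only [Finset.mem_insert, Finset.mem_singleton] at hx
      push_neg at hx
      have hx0 : x.val ≠ 0 := fun h => hx.1 (Fin.ext h)
      have hx1 : x.val ≠ N - 1 := fun h => hx.2 (Fin.ext h)
      simp [hΦ', hx0, hx1]
  have hφv0 : φv t ⟨0, by omega⟩ = φ₀ t := by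
    rw [hφv]
    simp
  have hφv1 : φv t ⟨N - 1, by omega⟩ = φ₁ t := by
    rw [hφv]
    have hn0 : N - 1 ≠ 0 := by omega
    simp [hn0]
  set A := ∑ i, p t i * ∑ j, T i j * q t j with hA_def
  set B := ∑ i, p t i * φv t i with hB_def
  set C := ∑ i, deriv f (q t i) * p t i with hC_def
  have hsym : (∑ i, q t i * ∑ j, T i j * p t j) = A := by
    calc (∑ i, q t i * ∑ j, T i j * p t j)
        = ∑ i, ∑ j, q t i * (T i j * p t j) :=
          Finset.sum_congr rfl fun i _ => Finset.mul_sum _ _ _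
      _ = ∑ j, ∑ i, q t i * (T i j * p t j) := Finset.sum_comm
      _ = A := by
          rw [hA_def]
          refine Finset.sum_congr rfl fun i _ => ?_
          rw [Finset.mul_sum]
          refine Finset.sum_congr rfl fun j _ => ?_
          rw [hTsym j i]
          ring
  have hsplit1 : (∑ i, 2 * p t i *
        (-(1/Δx^2) * (∑ j, T i j * q t j) + (1/Δx^2) * φv t i - deriv f (q t i)))
      = -(2/Δx^2) * A + (2/Δx^2) * B - 2 * C := by
    have key : ∀ i : Fin N, 2 * p t i *
          (-(1/Δx^2) * (∑ j, T i j * q t j) + (1/Δx^2) * φv t i - deriv f (q t i))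
        = (-(2/Δx^2) * (p t i * ∑ j, T i j * q t j) + (2/Δx^2) * (p t i * φv t i))
            - 2 * (deriv f (q t i) * p t i) := fun i => by ring
    rw [Finset.sum_congr rfl fun i _ => key i, Finset.sum_sub_distrib,
      Finset.sum_add_distrib, ← Finset.mul_sum, ← Finset.mul_sum, ← Finset.mul_sum,
      ← hA_def, ← hB_def, ← hC_def]
  have hsplit2 : (∑ i, (p t i * (∑ j, T i j * q t j) + q t i * ∑ j, T i j * p t j))
      = A + A := by
    rw [Finset.sum_add_distrib, ← hA_def, hsym]
  have hsplit4 : (∑ i, (Φ' i * φv t i + φv t i * Φ' i))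
      = 2 * (φ₀ t * deriv φ₀ t + φ₁ t * deriv φ₁ t) := by
    have key : ∀ i : Fin N, Φ' i * φv t i + φv t i * Φ' i = 2 * (φv t i * Φ' i) :=
      fun i => by ring
    rw [Finset.sum_congr rfl fun i _ => key i, ← Finset.mul_sum, hsupp (φv t),
      hφv0, hφv1]
  have hsplit5 : (∑ i, (p t i * φv t i + q t i * Φ' i))
      = B + (q t ⟨0, by omega⟩ * deriv φ₀ t + q t ⟨N - 1, by omega⟩ * deriv φ₁ t) := by
    rw [Finset.sum_add_distrib, ← hB_def, hsupp (q t)]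
  rw [hsplit1, hsplit2, hsplit4, hsplit5]
  field_simp
  ring
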